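/- arXiv:1802.05734 — 2 statements merged into one kernel-verified Lean document; each statement's English description precedes it below -/
import Mathlib

section
/- For every uncountable cardinal κ and every ordinal α < κ, there exists an ordinal β such that for all η with 1 ≤ η ≤ α, the ordinal ω^(ω^(β+η)) is multiplicatively closed, lies strictly below κ, and is not a cardinal (its cardinality equals the cardinality of ω^(ω^β), which is strictly smaller than it). -/
open Ordinal Cardinal

lemma card_omega0_opow_le (x : Ordinal.{u}) : (omega0 ^ x).card ≤ max ℵ₀ x.card := by
  induction x using Ordinal.limitRecOn with
  | zero => simp
  | add_one x ih =>
      rw [opow_add_one, Ordinal.card_mul, Ordinal.card_omega0]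
      calc (omega0 ^ x).card * ℵ₀ ≤ max ℵ₀ x.card * ℵ₀ := by
            exact mul_le_mul_left ih _
        _ ≤ max ℵ₀ x.card := by
            apply Cardinal.mul_le_max_of_aleph0_le_left (le_max_left _ _) |>.trans
            exact max_le le_rfl (le_max_left _ _)
        _ ≤ max ℵ₀ (Order.succ x).card := by
            apply max_le_max le_rfl
            exact Ordinal.card_le_card (le_of_lt (Order.lt_succ x))
  | limit x hx ih =>
      have hxcard : ℵ₀ ≤ x.card := by
        rw [← Ordinal.card_omega0]
        exact Ordinal.card_le_card (omega0_le_of_isSuccLimit hx)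
      have h1 : omega0 ^ x ≤ ⨆ a : Set.Iio x, omega0 ^ (a : Ordinal) := by
        rw [opow_le_of_isSuccLimit omega0_ne_zero hx]
        intro b hb
        exact Ordinal.le_iSup (fun a : Set.Iio x => omega0 ^ (a : Ordinal)) ⟨b, hb⟩
      have h2 := Ordinal.card_iSup_Iio_le_card_mul_iSup
        (fun a : Set.Iio x => omega0 ^ (a : Ordinal.{u})) (o := x)
      have h3 : (⨆ a : Set.Iio x, (omega0 ^ (a : Ordinal)).card) ≤ max ℵ₀ x.card := by
        apply ciSup_le'
        rintro ⟨a, ha⟩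
        exact (ih a ha).trans (max_le_max le_rfl (Ordinal.card_le_card ha.le))
      calc (omega0 ^ x).card ≤ (⨆ a : Set.Iio x, omega0 ^ (a : Ordinal)).card :=
            Ordinal.card_le_card h1
        _ ≤ Cardinal.lift x.card * ⨆ a : Set.Iio x, (omega0 ^ (a : Ordinal)).card := h2
        _ ≤ x.card * max ℵ₀ x.card := by
            rw [Cardinal.lift_id]; exact mul_le_mul_right h3 _
        _ ≤ max ℵ₀ x.card := by
            rw [max_eq_right hxcard, Cardinal.mul_eq_self hxcard]

theorem mul_closed_noncardinal_intervals (κ : Cardinal) (hκ : Cardinal.aleph0 < κ)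
    (α : Ordinal) (hα : α < κ.ord) :
    ∃ β : Ordinal, ∀ η : Ordinal, 1 ≤ η → η ≤ α →
      (∀ μ < Ordinal.omega0 ^ (Ordinal.omega0 ^ (β + η)),
        ∀ ν < Ordinal.omega0 ^ (Ordinal.omega0 ^ (β + η)),
          μ * ν < Ordinal.omega0 ^ (Ordinal.omega0 ^ (β + η))) ∧
      Ordinal.omega0 ^ (Ordinal.omega0 ^ (β + η)) < κ.ord ∧
      (Ordinal.omega0 ^ (Ordinal.omega0 ^ (β + η))).card.ord ≠
        Ordinal.omega0 ^ (Ordinal.omega0 ^ (β + η)) ∧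
      (Ordinal.omega0 ^ (Ordinal.omega0 ^ (β + η))).card =
        (Ordinal.omega0 ^ (Ordinal.omega0 ^ β)).card ∧
      (Ordinal.omega0 ^ (Ordinal.omega0 ^ (β + η))).card.ord <
        Ordinal.omega0 ^ (Ordinal.omega0 ^ (β + η)) := by
  refine ⟨α + omega0, fun η hη1 hηα => ?_⟩
  set β := α + omega0 with hβ
  have hβcard : β.card = α.card + ℵ₀ := by
    rw [hβ, Ordinal.card_add, Ordinal.card_omega0]
  have hβinf : ℵ₀ ≤ β.card := by rw [hβcard]; exact le_add_self
  -- cardinality of ω^(ω^γ) is β.card for β ≤ γ with γ.card = β.card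
  have key : ∀ γ : Ordinal, β ≤ γ → γ.card = β.card →
      (omega0 ^ (omega0 ^ γ)).card = β.card := by
    intro γ hγ hγc
    apply le_antisymm
    · calc (omega0 ^ (omega0 ^ γ)).card ≤ max ℵ₀ (omega0 ^ γ).card :=
            card_omega0_opow_le _
        _ ≤ max ℵ₀ (max ℵ₀ γ.card) := max_le_max le_rfl (card_omega0_opow_le _)
        _ = β.card := by rw [max_eq_right, max_eq_right] <;>
            simp [hγc, hβinf, le_max_right]
    · calc β.card ≤ γ.card := hγc.ge
        _ ≤ (omega0 ^ γ).card := Ordinal.card_le_card (right_le_opow γ one_lt_omega0)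
        _ ≤ (omega0 ^ (omega0 ^ γ)).card :=
            Ordinal.card_le_card (right_le_opow _ one_lt_omega0)
  have hηc : (β + η).card = β.card := by
    rw [Ordinal.card_add]
    exact Cardinal.add_eq_left hβinf
      ((Ordinal.card_le_card hηα).trans (hβcard ▸ le_self_add))
  have hcard1 : (omega0 ^ (omega0 ^ (β + η))).card = β.card :=
    key _ (le_self_add) hηc
  have hcard2 : (omega0 ^ (omega0 ^ β)).card = β.card := key β le_rfl rfl
  have hlt : omega0 ^ (omega0 ^ β) < omega0 ^ (omega0 ^ (β + η)) := by
    rw [opow_lt_opow_iff_right one_lt_omega0, opow_lt_opow_iff_right one_lt_omega0]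
    exact lt_add_of_pos_right β (lt_of_lt_of_le zero_lt_one hη1)
  have hordlt : (omega0 ^ (omega0 ^ (β + η))).card.ord < omega0 ^ (omega0 ^ (β + η)) := by
    calc (omega0 ^ (omega0 ^ (β + η))).card.ord
        = (omega0 ^ (omega0 ^ β)).card.ord := by rw [hcard1, hcard2]
      _ ≤ omega0 ^ (omega0 ^ β) := Cardinal.ord_card_le _
      _ < _ := hlt
  refine ⟨fun μ hμ ν hν => principal_mul_omega0_opow_opow _ hμ hν, ?_, hordlt.ne, ?_, hordlt⟩
  · rw [Cardinal.lt_ord, hcard1, hβcard]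
    exact Cardinal.add_lt_of_lt hκ.le (Cardinal.lt_ord.mp hα) hκ
  · rw [hcard1, hcard2]
end

section
/- Let α be an infinite ordinal. Then α is closed under ordinal multiplication (μ · ν < α for all μ, ν < α) if and only if α is closed under the Gödel pairing function, i.e., the canonical order isomorphism from Ord × Ord (with the Gödel well-ordering) to Ord maps pairs of ordinals below α to ordinals below α. -/
/-- The Gödel well-ordering on pairs of ordinals: compare first by maximum,
then lexicographically. -/
def GodelLT (p q : Ordinal × Ordinal) : Prop :=
  max p.1 p.2 < max q.1 q.2 ∨
    (max p.1 p.2 = max q.1 q.2 ∧ (p.1 < q.1 ∨ (p.1 = q.1 ∧ p.2 < q.2)))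

open Ordinal

private lemma godel_le_of_strictMono {g : Ordinal × Ordinal → Ordinal}
    (hg_iso : ∀ p q, GodelLT p q ↔ g p < g q) (hg_surj : Function.Surjective g)
    (f : Ordinal × Ordinal → Ordinal) (hf : ∀ p q, GodelLT p q → f p < f q) :
    ∀ p, g p ≤ f p := by
  have main : ∀ γ : Ordinal, ∀ p, g p = γ → g p ≤ f p := by
    intro γ
    induction γ using Ordinal.induction with
    | h γ IH =>
      intro p hp
      by_contra h
      push_neg at h
      obtain ⟨q, hq⟩ := hg_surj (f p)
      have hql : g q < g p := by rw [hq]; exact h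
      have hgo : GodelLT q p := (hg_iso q p).mpr hql
      have hfq : f q < f p := hf _ _ hgo
      have h2 : g q ≤ f q := IH (g q) (by rw [← hp]; exact hql) q rfl
      rw [hq] at h2
      exact absurd (h2.trans_lt hfq) (lt_irrefl _)
  exact fun p => main (g p) p rfl

private lemma le_godel_of_chain {g : Ordinal × Ordinal → Ordinal}
    (hg_iso : ∀ p q, GodelLT p q ↔ g p < g q)
    (e : Ordinal → Ordinal × Ordinal) (he : ∀ a b, a < b → GodelLT (e a) (e b)) (γ : Ordinal) :
    γ ≤ g (e γ) :=
  StrictMono.le_apply (f := fun x => g (e x)) (fun a b h => (hg_iso _ _).mp (he a b h))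

private lemma godel_chain_div {m : Ordinal} (hm : m ≠ 0) {a b : Ordinal} (h : a < b) :
    GodelLT (m + a / m, a % m) (m + b / m, b % m) := by
  have hq : a / m ≤ b / m := Ordinal.div_le_left h.le m
  have hmax : ∀ c : Ordinal, max (m + c / m) (c % m) = m + c / m := fun c =>
    max_eq_left ((Ordinal.mod_lt c hm).le.trans (le_self_add))
  rcases lt_or_eq_of_le hq with hq | hq
  · exact Or.inl (by rw [hmax, hmax]; exact add_lt_add_right hq m)
  · refine Or.inr ⟨by rw [hmax, hmax, hq], Or.inr ⟨by rw [hq], ?_⟩⟩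
    have key : m * (a / m) + a % m < m * (b / m) + b % m := by
      rw [Ordinal.div_add_mod, Ordinal.div_add_mod]; exact h
    rw [hq] at key
    exact (add_lt_add_iff_left _).1 key

private lemma two_eq : (2 : Ordinal) = 1 + 1 := by norm_num

/-- An explicit strictly `GodelLT`-monotone function dominating the Gödel pairing. -/
private noncomputable def gF (p : Ordinal × Ordinal) : Ordinal :=
  (max p.1 p.2 + 1) * (max p.1 p.2 + 1) * max p.1 p.2 + ((max p.1 p.2 + 1) * p.1 + p.2)

private lemma gF_inner_lt (p : Ordinal × Ordinal) :
    (max p.1 p.2 + 1) * p.1 + p.2 < (max p.1 p.2 + 1) * (max p.1 p.2 + 1) := by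
  set a := max p.1 p.2
  calc (a + 1) * p.1 + p.2 < (a + 1) * p.1 + (a + 1) :=
        add_lt_add_right (lt_of_le_of_lt (le_max_right p.1 p.2)
          (lt_add_of_pos_right a zero_lt_one)) _
    _ = (a + 1) * (p.1 + 1) := by rw [mul_add, mul_one]
    _ ≤ (a + 1) * (a + 1) := mul_le_mul_right (add_le_add_left (le_max_left p.1 p.2) 1) _

private lemma gF_strictMono : ∀ p q, GodelLT p q → gF p < gF q := by
  intro p q hpq
  obtain h | ⟨heq, h⟩ := hpq
  · have hab : max p.1 p.2 + 1 ≤ max q.1 q.2 := by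
      rwa [Ordinal.add_one_eq_succ, Order.succ_le_iff]
    have hab1 : max p.1 p.2 + 1 ≤ max q.1 q.2 + 1 := add_le_add_left h.le 1
    have h1 : gF p <
        (max p.1 p.2 + 1) * (max p.1 p.2 + 1) * (max p.1 p.2 + 1) := by
      unfold gF
      conv_rhs => rw [mul_add, mul_one]
      exact add_lt_add_right (gF_inner_lt p) _
    have e1 : (max p.1 p.2 + 1) * (max p.1 p.2 + 1) ≤
        (max q.1 q.2 + 1) * (max q.1 q.2 + 1) :=
      (mul_le_mul_right hab1 _).trans (mul_le_mul_left hab1 _)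
    have e2 : (max p.1 p.2 + 1) * (max p.1 p.2 + 1) * (max p.1 p.2 + 1) ≤
        (max q.1 q.2 + 1) * (max q.1 q.2 + 1) * max q.1 q.2 :=
      (mul_le_mul_left e1 _).trans (mul_le_mul_right hab _)
    exact lt_of_lt_of_le (h1.trans_le e2) le_self_add
  · obtain h | ⟨h1eq, h2⟩ := h
    · unfold gF
      rw [← heq]
      apply add_lt_add_right
      set a := max p.1 p.2
      have hp2 : p.2 < a + 1 :=
        lt_of_le_of_lt (le_max_right p.1 p.2) (lt_add_of_pos_right a zero_lt_one)
      have hq1 : p.1 + 1 ≤ q.1 := by rwa [Ordinal.add_one_eq_succ, Order.succ_le_iff]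
      calc (a + 1) * p.1 + p.2 < (a + 1) * p.1 + (a + 1) := add_lt_add_right hp2 _
        _ = (a + 1) * (p.1 + 1) := by rw [mul_add, mul_one]
        _ ≤ (a + 1) * q.1 := mul_le_mul_right hq1 _
        _ ≤ (a + 1) * q.1 + q.2 := le_self_add
    · unfold gF
      rw [← heq, ← h1eq]
      exact add_lt_add_right (add_lt_add_right h2 _) _

theorem mul_closed_iff_godel_closed (α : Ordinal) (hα : Ordinal.omega0 ≤ α)
    (g : Ordinal × Ordinal → Ordinal)
    (hg_iso : ∀ p q, GodelLT p q ↔ g p < g q) (hg_surj : Function.Surjective g) :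
    (∀ μ < α, ∀ ν < α, μ * ν < α) ↔ (∀ μ < α, ∀ ν < α, g (μ, ν) < α) := by
  have h1α : (1 : Ordinal) < α := lt_of_lt_of_le Ordinal.one_lt_omega0 hα
  have h2α : (2 : Ordinal) < α := by
    refine lt_of_lt_of_le ?_ hα
    exact_mod_cast Ordinal.nat_lt_omega0 2
  constructor
  · -- multiplication closed → Gödel closed
    intro Hm
    have hsucc : ∀ x < α, x + 1 < α := by
      intro x hx
      rcases lt_or_ge x 2 with h | h
      · have hle : x + 1 ≤ 2 := by
          rw [Ordinal.add_one_eq_succ, Order.succ_le_iff]; exact h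
        exact lt_of_le_of_lt hle h2α
      · have h1 : x + 1 ≤ x + x := add_le_add_right (le_trans one_le_two h) x
        have h2 : x + x = x * 2 := by rw [two_eq, mul_add, mul_one]
        exact lt_of_le_of_lt (h1.trans_eq h2) (Hm x hx 2 h2α)
    have hadd : ∀ a < α, ∀ b < α, a + b < α := by
      intro a ha b hb
      have hm : max a b < α := max_lt ha hb
      have h1 : a + b ≤ max a b * 2 := by
        rw [two_eq, mul_add, mul_one]
        exact add_le_add (le_max_left a b) (le_max_right a b)
      exact lt_of_le_of_lt h1 (Hm _ hm 2 h2α)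
    intro μ hμ ν hν
    have hgf : g (μ, ν) ≤ gF (μ, ν) :=
      godel_le_of_strictMono hg_iso hg_surj gF gF_strictMono (μ, ν)
    have hm : max μ ν < α := max_lt hμ hν
    have hM : max μ ν + 1 < α := hsucc _ hm
    have hfin : gF (μ, ν) < α := by
      have hMM : (max μ ν + 1) * (max μ ν + 1) < α := Hm _ hM _ hM
      have hMMm : (max μ ν + 1) * (max μ ν + 1) * (max μ ν) < α := Hm _ hMM _ hm
      have hMμ : (max μ ν + 1) * μ < α := Hm _ hM _ hμ
      exact hadd _ hMMm _ (hadd _ hMμ _ hν)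
    exact lt_of_le_of_lt hgf hfin
  · -- Gödel closed → multiplication closed
    intro Hg
    have hsucc : ∀ x < α, x + 1 < α := by
      intro x hx
      rcases eq_or_ne x 0 with rfl | h0
      · simpa using h1α
      · have hx0 : 0 < x := pos_iff_ne_zero.2 h0
        have l1 : x ≤ g (0, x) :=
          le_godel_of_chain hg_iso (fun t => (0, t))
            (fun a b h => Or.inl (by simpa using h)) x
        have l2 : g (0, x) < g (x, x) :=
          (hg_iso _ _).mp (Or.inr ⟨by simp, Or.inl hx0⟩)
        have l3 : x + 1 ≤ g (x, x) := by
          rw [Ordinal.add_one_eq_succ, Order.succ_le_iff]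
          exact lt_of_le_of_lt l1 l2
        exact lt_of_le_of_lt l3 (Hg x hx x hx)
    have hadd : ∀ a < α, ∀ b < α, a + b < α := by
      intro a ha b hb
      set m := max a b with hm_def
      have hmlt : m < α := max_lt ha hb
      rcases eq_or_ne m 0 with h0 | h0
      · have ha0 : a = 0 := le_antisymm ((le_max_left a b).trans h0.le) (zero_le (a := a))
        have hb0 : b = 0 := le_antisymm ((le_max_right a b).trans h0.le) (zero_le (a := b))
        rw [ha0, hb0, add_zero]
        exact lt_of_lt_of_le Ordinal.omega0_pos hα
      · have hge : a + b ≤ g (m + (a + b) / m, (a + b) % m) :=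
          le_godel_of_chain hg_iso _ (fun x y h => godel_chain_div h0 h) (a + b)
        have hdiv : (a + b) / m ≤ 2 := by
          apply Ordinal.div_le_of_le_mul
          rw [two_eq, mul_add, mul_one]
          exact add_le_add (le_max_left a b) (le_max_right a b)
        have hc1 : m + (a + b) / m < α := by
          refine lt_of_le_of_lt (add_le_add_right hdiv m) ?_
          have h22 : m + 2 = (m + 1) + 1 := by rw [two_eq, add_assoc]
          rw [h22]
          exact hsucc _ (hsucc _ hmlt)
        have hc2 : (a + b) % m < α := lt_trans (Ordinal.mod_lt _ h0) hmlt
        exact lt_of_le_of_lt hge (Hg _ hc1 _ hc2)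
    intro μ hμ ν hν
    set m := max μ ν with hm_def
    have hmlt : m < α := max_lt hμ hν
    set M := m + 1 with hM_def
    have hMlt : M < α := hsucc m hmlt
    have hM0 : M ≠ 0 :=
      ((zero_le (a := m)).trans_lt (lt_add_of_pos_right m zero_lt_one)).ne'
    have hμν : μ * ν < M * M := by
      calc μ * ν ≤ m * m := mul_le_mul' (le_max_left μ ν) (le_max_right μ ν)
        _ ≤ M * m := mul_le_mul_left (le_of_lt (lt_add_of_pos_right m zero_lt_one)) m
        _ < M * M := by
            rw [hM_def, mul_add, mul_one]
            exact lt_add_of_pos_right _ (pos_iff_ne_zero.2 hM0)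
    have hge : μ * ν ≤ g (M + (μ * ν) / M, (μ * ν) % M) :=
      le_godel_of_chain hg_iso _ (fun x y h => godel_chain_div hM0 h) (μ * ν)
    have hq : (μ * ν) / M < M := (Ordinal.div_lt hM0).2 hμν
    have hc1 : M + (μ * ν) / M < α := lt_trans (add_lt_add_right hq M) (hadd M hMlt M hMlt)
    have hc2 : (μ * ν) % M < α := lt_trans (Ordinal.mod_lt _ hM0) hMlt
    exact lt_of_le_of_lt hge (Hg _ hc1 _ hc2)
end
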